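/- (Classical MHTF for an arbitrary initial probability distribution.) Let 𝒫 = (p_{ij}) be the n×n stochastic matrix of an irreducible finite Markov chain with unique invariant distribution π = (π_i) (so π_i > 0, Σ_i π_i = 1, 𝒫π = π when states evolve by x ↦ 𝒫x), and let Z = (I_n − 𝒫 + π·𝟙ᵀ)⁻¹ be the fundamental matrix (𝟙 the all-ones column vector). Fix a state j and let x = (x_i) be an initial probability distribution. Let Q_j be the diagonal matrix with (Q_j)_{ii} = 1 for i ≠ j and (Q_j)_{jj} = 0. Then the mean hitting time τ(x→j) = Σ_{r≥1} r·(e_jᵀ 𝒫 (Q_j 𝒫)^{r−1} x) converges and τ(x→j) = 1 + (Z_{jj} − (Z𝒫x)_j)/π_j. -/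

import Mathlib

open Matrix Finset Filter Topology


lemma pow_entry_nonneg' {n : ℕ} (A : Matrix (Fin n) (Fin n) ℝ) (hA : ∀ i k, 0 ≤ A i k) :
    ∀ r i k, 0 ≤ (A ^ r) i k := by
  intro r
  induction r with
  | zero => intro i k; simp [Matrix.one_apply]; split <;> norm_num
  | succ r ih =>
      intro i k
      rw [pow_succ, Matrix.mul_apply]
      exact Finset.sum_nonneg fun l _ => mul_nonneg (ih i l) (hA l k)

lemma hit_pos {n : ℕ} (Pm : Matrix (Fin n) (Fin n) ℝ) (hPnn : ∀ i k, 0 ≤ Pm i k) (j : Fin n) :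
    ∀ r k, 0 < (Pm ^ (r+1)) j k →
      ∃ s : ℕ, 0 < (Pm * (Matrix.diagonal (fun i => if i = j then (0:ℝ) else 1) * Pm) ^ s) j k := by
  set M := Matrix.diagonal (fun i : Fin n => if i = j then (0:ℝ) else 1) * Pm with hM
  have hMapp : ∀ i k, M i k = (if i = j then 0 else 1) * Pm i k := by
    intro i k; rw [hM, Matrix.diagonal_mul]
  have hMnn : ∀ i k, 0 ≤ M i k := by
    intro i k; rw [hMapp]; split <;> simp [hPnn i k]
  have hMpnn := pow_entry_nonneg' M hMnn
  intro r
  induction r with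
  | zero =>
      intro k h
      refine ⟨0, ?_⟩; simpa using h
  | succ r ih =>
      intro k h
      rw [pow_succ, Matrix.mul_apply] at h
      obtain ⟨i, -, hi⟩ : ∃ i ∈ Finset.univ, 0 < (Pm ^ (r+1)) j i * Pm i k := by
        by_contra hc
        push_neg at hc
        have : ∑ i, (Pm ^ (r+1)) j i * Pm i k ≤ 0 :=
          Finset.sum_nonpos fun i hi => hc i hi
        linarith
      rcases mul_pos_iff.mp hi with ⟨hPji, hPik⟩ | ⟨ha, hb⟩
      · by_cases hij : i = j
        · subst hij
          exact ⟨0, by simpa using hPik⟩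
        · obtain ⟨s, hs⟩ := ih i hPji
          refine ⟨s + 1, ?_⟩
          have expand : (Pm * M ^ (s+1)) j k = ∑ l, (Pm * M ^ s) j l * M l k := by
            rw [pow_succ, ← mul_assoc, Matrix.mul_apply]
          rw [expand]
          have hterm : 0 < (Pm * M ^ s) j i * M i k := by
            apply mul_pos hs
            rw [hMapp]
            simp [hij, hPik]
          calc (0:ℝ) < (Pm * M ^ s) j i * M i k := hterm
            _ ≤ ∑ l, (Pm * M ^ s) j l * M l k := by
                apply Finset.single_le_sum (f := fun l => (Pm * M ^ s) j l * M l k)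
                  (fun l _ => mul_nonneg ?_ (hMnn l k)) (Finset.mem_univ i)
                rw [Matrix.mul_apply]
                exact Finset.sum_nonneg fun m _ => mul_nonneg (hPnn j m) (hMpnn s m l)
      · exact absurd hb (not_lt.mpr (hPnn i k))


/-- Classical MHTF for an arbitrary initial probability distribution:
for an irreducible column-stochastic matrix `𝒫` with invariant distribution `π`,
fundamental matrix `Z = (I − 𝒫 + π𝟙ᵀ)⁻¹`, a state `j` and an initial distribution `x`,
the mean hitting time `τ(x→j) = Σ_{r≥1} r·(e_jᵀ 𝒫 (Q_j 𝒫)^{r−1} x)` converges and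
equals `1 + (Z_{jj} − (Z𝒫x)_j)/π_j`, where `Q_j` kills the `j`-th coordinate. -/
theorem classical_mhtf_initial_distribution {n : ℕ}
    (Pm Z : Matrix (Fin n) (Fin n) ℝ) (π x : Fin n → ℝ) (j : Fin n)
    (hPnn : ∀ i k, 0 ≤ Pm i k)
    (hPstoch : ∀ k, ∑ i, Pm i k = 1)
    (hirr : ∀ i k, ∃ r : ℕ, 1 ≤ r ∧ 0 < (Pm ^ r) i k)
    (hπpos : ∀ i, 0 < π i) (hπsum : ∑ i, π i = 1)
    (hπinv : Pm *ᵥ π = π)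
    (hZ1 : Z * (1 - Pm + Matrix.vecMulVec π (fun _ => 1)) = 1)
    (hZ2 : (1 - Pm + Matrix.vecMulVec π (fun _ => 1)) * Z = 1)
    (hxnn : ∀ i, 0 ≤ x i) (hxsum : ∑ i, x i = 1) :
    HasSum (fun r : ℕ => ((r : ℝ) + 1) *
        (Pm *ᵥ (((Matrix.diagonal (fun i => if i = j then 0 else 1) * Pm) ^ r) *ᵥ x)) j)
      (1 + (Z j j - (Z *ᵥ (Pm *ᵥ x)) j) / π j) := by
  set M := Matrix.diagonal (fun i : Fin n => if i = j then (0:ℝ) else 1) * Pm with hMdef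
  have hMapp : ∀ i k, M i k = (if i = j then 0 else 1) * Pm i k := by
    intro i k; rw [hMdef, Matrix.diagonal_mul]
  have hMnn : ∀ i k, 0 ≤ M i k := by
    intro i k; rw [hMapp]; split <;> simp [hPnn i k]
  have hMpnn := pow_entry_nonneg' M hMnn
  -- basic sum exchange
  have colsum2 : ∀ (A : Matrix (Fin n) (Fin n) ℝ) (u : Fin n → ℝ),
      ∑ i, (A *ᵥ u) i = ∑ k, (∑ i, A i k) * u k := by
    intro A u
    simp only [Matrix.mulVec, dotProduct]
    rw [Finset.sum_comm]
    simp [Finset.sum_mul]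
  have hMcol : ∀ k, ∑ i, M i k = 1 - Pm j k := by
    intro k
    simp only [hMapp, ite_mul, zero_mul, one_mul]
    have h1 : ∀ i : Fin n, (if i = j then (0:ℝ) else Pm i k) = Pm i k - (if i = j then Pm i k else 0) := by
      intro i; split <;> ring
    rw [Finset.sum_congr rfl (fun i _ => h1 i), Finset.sum_sub_distrib,
      Finset.sum_ite_eq' Finset.univ j (fun i => Pm i k), hPstoch k]
    simp
  have colsum : ∀ u : Fin n → ℝ, ∑ i, (M *ᵥ u) i = ∑ i, u i - (Pm *ᵥ u) j := by
    intro u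
    rw [colsum2]
    simp only [hMcol, sub_mul, one_mul]
    rw [Finset.sum_sub_distrib]
    simp [Matrix.mulVec, dotProduct]
  -- sequences
  set y : ℕ → Fin n → ℝ := fun r => (M ^ r) *ᵥ x with hydef
  have hynn : ∀ r i, 0 ≤ y r i := by
    intro r i
    simp only [hydef, Matrix.mulVec, dotProduct]
    exact Finset.sum_nonneg fun l _ => mul_nonneg (hMpnn r i l) (hxnn l)
  set s : ℕ → ℝ := fun r => ∑ i, y r i with hsdef
  set b : ℕ → ℝ := fun r => (Pm *ᵥ (y r)) j with hbdef
  have hbnn : ∀ r, 0 ≤ b r := by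
    intro r
    simp only [hbdef, Matrix.mulVec, dotProduct]
    exact Finset.sum_nonneg fun l _ => mul_nonneg (hPnn j l) (hynn r l)
  have hsnn : ∀ r, 0 ≤ s r := fun r => Finset.sum_nonneg fun i _ => hynn r i
  have hysucc : ∀ r, y (r + 1) = M *ᵥ y r := by
    intro r
    simp only [hydef, Matrix.mulVec_mulVec, ← pow_succ']
  have hsb : ∀ r, s (r + 1) = s r - b r := by
    intro r
    simp only [hsdef, hbdef, hysucc r]
    rw [colsum (y r)]
  have hs0 : s 0 = 1 := by simp [hsdef, hydef, Matrix.one_mulVec, hxsum]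
  have hsmono : ∀ r, s (r + 1) ≤ s r := fun r => by rw [hsb r]; linarith [hbnn r]
  have hsanti : Antitone s := antitone_nat_of_succ_le hsmono
  have hsle1 : ∀ r, s r ≤ 1 := fun r => hs0 ▸ hsanti (Nat.zero_le r)
  -- key algebra: Z *ᵥ π = π
  have hVπ : Matrix.vecMulVec π (fun _ : Fin n => (1:ℝ)) *ᵥ π = π := by
    funext i
    simp [Matrix.mulVec, dotProduct, Matrix.vecMulVec_apply, ← Finset.mul_sum, hπsum]
  have hZπ : Z *ᵥ π = π := by
    have h := congrArg (fun A => A *ᵥ π) hZ1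
    simpa [← Matrix.mulVec_mulVec, Matrix.add_mulVec, Matrix.sub_mulVec, hπinv, hVπ,
      Matrix.one_mulVec] using h
  have hZV : Z * Matrix.vecMulVec π (fun _ : Fin n => (1:ℝ)) = Matrix.vecMulVec π (fun _ : Fin n => (1:ℝ)) := by
    ext i k
    rw [Matrix.mul_apply]
    have : ∑ l, Z i l * Matrix.vecMulVec π (fun _ : Fin n => (1:ℝ)) l k = (Z *ᵥ π) i := by
      simp [Matrix.mulVec, dotProduct, Matrix.vecMulVec_apply]
    rw [this, hZπ]
    simp [Matrix.vecMulVec_apply]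
  have hK : ∀ i k, (Z * Pm) i k = Z i k - (1 : Matrix (Fin n) (Fin n) ℝ) i k + π i := by
    intro i k
    have h : Z - Z * Pm + Matrix.vecMulVec π (fun _ : Fin n => (1:ℝ)) = 1 := by
      calc Z - Z * Pm + Matrix.vecMulVec π (fun _ : Fin n => (1:ℝ))
          = Z * (1 - Pm + Matrix.vecMulVec π (fun _ : Fin n => (1:ℝ))) := by
            rw [Matrix.mul_add, Matrix.mul_sub, Matrix.mul_one, hZV]
        _ = 1 := hZ1
    have := congrFun (congrFun h i) k
    simp only [Matrix.add_apply, Matrix.sub_apply, Matrix.vecMulVec_apply] at this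
    linarith [this]
  set v : Fin n → ℝ := fun k => 1 + (Z j j - (Z * Pm) j k) / π j with hvdef
  have hπj : (0:ℝ) < π j := hπpos j
  have hvj : v j = 1 / π j := by
    have h := hK j j
    simp only [Matrix.one_apply_eq] at h
    rw [hvdef]
    field_simp [h]
    linarith [h]
  have hWP : ∀ k, ((Z * Pm) * Pm) j k = (Z * Pm) j k - Pm j k + π j := by
    intro k
    rw [Matrix.mul_apply]
    have h1 : ∀ i : Fin n, (Z * Pm) j i * Pm i k
        = Z j i * Pm i k - (if j = i then Pm i k else 0) + π j * Pm i k := by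
      intro i
      rw [hK j i, Matrix.one_apply]
      split <;> ring
    rw [Finset.sum_congr rfl (fun i _ => h1 i), Finset.sum_add_distrib, Finset.sum_sub_distrib,
      Finset.sum_ite_eq Finset.univ j (fun i => Pm i k), ← Finset.mul_sum, hPstoch k,
      ← Matrix.mul_apply]
    simp
  have hrow : ∀ k, ∑ i, v i * M i k = v k - 1 := by
    intro k
    have hsplit : ∑ i, v i * M i k = (∑ i, v i * Pm i k) - v j * Pm j k := by
      have h1 : ∀ i : Fin n, v i * M i k = v i * Pm i k - (if i = j then v i * Pm i k else 0) := by
        intro i; rw [hMapp]; split <;> ring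
      rw [Finset.sum_congr rfl (fun i _ => h1 i), Finset.sum_sub_distrib,
        Finset.sum_ite_eq' Finset.univ j (fun i => v i * Pm i k)]
      simp
    have hA : ∑ i, v i * Pm i k = 1 + (Z j j - ((Z * Pm) * Pm) j k) / π j := by
      have h1 : ∀ i : Fin n, v i * Pm i k
          = Pm i k + (Z j j / π j) * Pm i k - (1 / π j) * ((Z * Pm) j i * Pm i k) := by
        intro i; rw [hvdef]; field_simp; ring
      rw [Finset.sum_congr rfl (fun i _ => h1 i), Finset.sum_sub_distrib, Finset.sum_add_distrib,
        ← Finset.mul_sum, ← Finset.mul_sum, hPstoch k, ← Matrix.mul_apply]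
      field_simp
      ring
    rw [hsplit, hA, hvj, hWP k, hvdef]
    field_simp
    ring
  -- telescoping with v
  set t : ℕ → ℝ := fun r => ∑ k, v k * y r k with htdef
  have hts : ∀ r, t (r + 1) = t r - s r := by
    intro r
    have h1 : t (r + 1) = ∑ k, v k * (M *ᵥ y r) k := by rw [htdef]; simp [hysucc r]
    have h2 : ∑ k, v k * (M *ᵥ y r) k = ∑ i, (∑ k, v k * M k i) * y r i := by
      simp only [Matrix.mulVec, dotProduct, Finset.mul_sum]
      rw [Finset.sum_comm]
      congr 1; funext i
      rw [Finset.sum_mul]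
      congr 1; funext k
      ring
    rw [h1, h2]
    have h3 : ∀ i : Fin n, (∑ k, v k * M k i) * y r i = v i * y r i - y r i := by
      intro i; rw [hrow i]; ring
    rw [Finset.sum_congr rfl (fun i _ => h3 i), Finset.sum_sub_distrib]
  have ht0 : t 0 = 1 + (Z j j - (Z *ᵥ (Pm *ᵥ x)) j) / π j := by
    have hy0 : y 0 = x := by simp [hydef, Matrix.one_mulVec]
    have hZPx : (Z *ᵥ (Pm *ᵥ x)) j = ∑ k, (Z * Pm) j k * x k := by
      rw [Matrix.mulVec_mulVec]
      simp [Matrix.mulVec, dotProduct]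
    rw [htdef]
    simp only [hy0]
    have h1 : ∀ k : Fin n, v k * x k
        = x k + (Z j j / π j) * x k - (1 / π j) * ((Z * Pm) j k * x k) := by
      intro k; rw [hvdef]; field_simp; ring
    rw [Finset.sum_congr rfl (fun k _ => h1 k), Finset.sum_sub_distrib, Finset.sum_add_distrib,
      ← Finset.mul_sum, ← Finset.mul_sum, hxsum, ← hZPx]
    field_simp
    ring
  -- geometric decay
  set c : ℕ → Fin n → ℝ := fun r k => ∑ i, (M ^ r) i k with hcdef
  have hc0 : ∀ k, c 0 k = 1 := by
    intro k; rw [hcdef]; simp [Matrix.one_apply]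
  have hcnn : ∀ r k, 0 ≤ c r k := fun r k => Finset.sum_nonneg fun i _ => hMpnn r i k
  have hPMnn : ∀ r i k, 0 ≤ (Pm * M ^ r) i k := by
    intro r i k
    rw [Matrix.mul_apply]
    exact Finset.sum_nonneg fun l _ => mul_nonneg (hPnn i l) (hMpnn r l k)
  have hcsucc : ∀ r k, c (r + 1) k = c r k - (Pm * M ^ r) j k := by
    intro r k
    have h := colsum (fun l => (M ^ r) l k)
    have h1 : ∀ i : Fin n, (M *ᵥ fun l => (M ^ r) l k) i = (M ^ (r+1)) i k := by
      intro i
      rw [pow_succ', Matrix.mul_apply]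
      simp [Matrix.mulVec, dotProduct]
    have h2 : (Pm *ᵥ fun l => (M ^ r) l k) j = (Pm * M ^ r) j k := by
      rw [Matrix.mul_apply]; simp [Matrix.mulVec, dotProduct]
    rw [Finset.sum_congr rfl (fun i _ => h1 i), h2] at h
    exact h
  have hcanti : ∀ k, Antitone (fun r => c r k) := by
    intro k
    apply antitone_nat_of_succ_le
    intro r
    rw [hcsucc r k]
    linarith [hPMnn r j k]
  have hcle1 : ∀ r k, c r k ≤ 1 := fun r k => (hc0 k) ▸ hcanti k (Nat.zero_le r)
  have hhit : ∀ k, ∃ r, c r k < 1 := by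
    intro k
    obtain ⟨r, hr1, hrpos⟩ := hirr j k
    obtain ⟨r', rfl⟩ : ∃ r', r = r' + 1 := ⟨r - 1, by omega⟩
    obtain ⟨sp, hsp⟩ := hit_pos Pm hPnn j r' k (by exact hrpos)
    refine ⟨sp + 1, ?_⟩
    rw [hcsucc sp k]
    have := hcle1 sp k
    rw [← hMdef] at hsp
    linarith
  choose f hf using hhit
  set N := Finset.univ.sup f with hNdef
  have hcN : ∀ k, c N k < 1 := by
    intro k
    exact lt_of_le_of_lt (hcanti k (Finset.le_sup (Finset.mem_univ k))) (hf k)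
  have hNe : (Finset.univ : Finset (Fin n)).Nonempty := ⟨j, Finset.mem_univ j⟩
  set δ : ℝ := Finset.univ.sup' hNe (fun k => c N k) with hδdef
  have hδlt : δ < 1 := by
    rw [hδdef, Finset.sup'_lt_iff]
    exact fun k _ => hcN k
  have hδnn : (0:ℝ) ≤ δ := le_trans (hcnn N j) (Finset.le_sup' _ (Finset.mem_univ j))
  have hNpos : 0 < N := by
    rcases Nat.eq_zero_or_pos N with h | h
    · exfalso; have := hcN j; rw [h, hc0 j] at this; exact lt_irrefl 1 this
    · exact h
  have hcleδ : ∀ k, c N k ≤ δ := fun k => Finset.le_sup' _ (Finset.mem_univ k)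
  have hshift : ∀ r, s (N + r) ≤ δ * s r := by
    intro r
    have hyNr : y (N + r) = (M ^ N) *ᵥ y r := by
      rw [hydef]
      simp only
      rw [Matrix.mulVec_mulVec, ← pow_add]
    have h1 : s (N + r) = ∑ k, c N k * y r k := by
      rw [hsdef]
      simp only [hyNr]
      exact colsum2 (M ^ N) (y r)
    rw [h1, hsdef, Finset.mul_sum]
    exact Finset.sum_le_sum fun k _ => mul_le_mul_of_nonneg_right (hcleδ k) (hynn r k)
  have hq : ∀ q r, s (N * q + r) ≤ δ ^ q * s r := by
    intro q
    induction q with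
    | zero => intro r; simp
    | succ q ih =>
        intro r
        have h1 : N * (q + 1) + r = N + (N * q + r) := by ring
        rw [h1, pow_succ]
        calc s (N + (N * q + r)) ≤ δ * s (N * q + r) := hshift _
          _ ≤ δ * (δ ^ q * s r) := mul_le_mul_of_nonneg_left (ih r) hδnn
          _ = δ ^ q * δ * s r := by ring
  have hsgeo : ∀ r, s r ≤ δ ^ (r / N) := by
    intro r
    have h1 : N * (r / N) + r % N = r := Nat.div_add_mod r N
    calc s r = s (N * (r / N) + r % N) := by rw [h1]
      _ ≤ δ ^ (r / N) * s (r % N) := hq _ _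
      _ ≤ δ ^ (r / N) * 1 := mul_le_mul_of_nonneg_left (hsle1 _) (pow_nonneg hδnn _)
      _ = δ ^ (r / N) := mul_one _
  -- limits
  have hdiv : Tendsto (fun r : ℕ => r / N) atTop atTop := by
    apply tendsto_atTop_atTop.2
    intro bb
    refine ⟨N * bb, fun r hr => ?_⟩
    rw [Nat.le_div_iff_mul_le hNpos, Nat.mul_comm]
    exact hr
  have hgeo0 : Tendsto (fun q : ℕ => δ ^ q) atTop (𝓝 0) :=
    tendsto_pow_atTop_nhds_zero_of_lt_one hδnn hδlt
  have hqgeo0 : Tendsto (fun q : ℕ => (q : ℝ) * δ ^ q) atTop (𝓝 0) := by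
    have h := (summable_pow_mul_geometric_of_norm_lt_one 1
      (r := δ) (by rwa [Real.norm_eq_abs, abs_of_nonneg hδnn])).tendsto_atTop_zero
    simpa using h
  have hG : Tendsto (fun q : ℕ => ((N:ℝ) * q + N) * δ ^ q) atTop (𝓝 0) := by
    have h := (hqgeo0.const_mul (N:ℝ)).add (hgeo0.const_mul (N:ℝ))
    simp only [mul_zero, add_zero] at h
    apply h.congr
    intro q; ring
  have hRs : Tendsto (fun R : ℕ => (R : ℝ) * s R) atTop (𝓝 0) := by
    apply squeeze_zero (fun R => mul_nonneg (Nat.cast_nonneg R) (hsnn R))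
      (g := fun R => ((N:ℝ) * (R / N : ℕ) + N) * δ ^ (R / N))
    · intro R
      have h1 : (R:ℝ) ≤ (N:ℝ) * (R / N : ℕ) + N := by
        have h2 : R < N * (R / N) + N := by
          have hm : R % N < N := Nat.mod_lt R hNpos
          calc R = N * (R / N) + R % N := (Nat.div_add_mod R N).symm
            _ < N * (R / N) + N := Nat.add_lt_add_left hm _
        calc (R:ℝ) ≤ ((N * (R / N) + N : ℕ) : ℝ) := by exact_mod_cast h2.le
          _ = (N:ℝ) * (R / N : ℕ) + N := by push_cast; ring
      exact mul_le_mul h1 (hsgeo R) (hsnn R)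
        (by positivity)
    · exact hG.comp hdiv
  set C : ℝ := ∑ k, |v k| with hCdef
  have hCnn : 0 ≤ C := Finset.sum_nonneg fun k _ => abs_nonneg _
  have htbound : ∀ R, |t R| ≤ C * δ ^ (R / N) := by
    intro R
    have h1 : |t R| ≤ ∑ k, |v k| * y R k := by
      rw [htdef]
      refine (Finset.abs_sum_le_sum_abs _ _).trans ?_
      apply Finset.sum_le_sum
      intro k _
      rw [abs_mul, abs_of_nonneg (hynn R k)]
    have h2 : ∑ k, |v k| * y R k ≤ C * s R := by
      rw [hCdef, Finset.sum_mul]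
      apply Finset.sum_le_sum
      intro k _
      apply mul_le_mul_of_nonneg_left _ (abs_nonneg _)
      exact Finset.single_le_sum (f := fun i => y R i) (fun i _ => hynn R i) (Finset.mem_univ k)
    calc |t R| ≤ C * s R := h1.trans h2
      _ ≤ C * δ ^ (R / N) := mul_le_mul_of_nonneg_left (hsgeo R) hCnn
  have hts0 : Tendsto t atTop (𝓝 0) := by
    apply squeeze_zero_norm htbound
    have h := ((hgeo0.comp hdiv).const_mul C)
    simpa using h
  -- partial sums
  have hF : ∀ R, ∑ r ∈ Finset.range R, ((r : ℝ) + 1) * (Pm *ᵥ ((M ^ r) *ᵥ x)) j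
      = t 0 - t R - R * s R := by
    intro R
    induction R with
    | zero => simp
    | succ R ih =>
        rw [Finset.sum_range_succ, ih]
        have hb : (Pm *ᵥ ((M ^ R) *ᵥ x)) j = b R := rfl
        have h1 : b R = s R - s (R + 1) := by rw [hsb R]; ring
        have h2 : t (R + 1) = t R - s R := hts R
        rw [hb, h1, h2]
        push_cast
        ring
  have hFt : Tendsto (fun R => ∑ r ∈ Finset.range R,
      ((r : ℝ) + 1) * (Pm *ᵥ ((M ^ r) *ᵥ x)) j) atTop (𝓝 (t 0)) := by
    have h := ((tendsto_const_nhds (x := t 0) (f := atTop)).sub hts0).sub hRs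
    simp only [sub_zero] at h
    apply h.congr
    intro R
    rw [hF R]
  have hfnn : ∀ r : ℕ, 0 ≤ ((r : ℝ) + 1) * (Pm *ᵥ ((M ^ r) *ᵥ x)) j := by
    intro r
    apply mul_nonneg (by positivity)
    exact hbnn r
  rw [← ht0]
  exact (hasSum_iff_tendsto_nat_of_nonneg hfnn _).2 hFt
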